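/- Hiding a set disjoint from U is nonexpansive with respect to d_U: if A ∩ U = ∅ then for all P, Q in T↓, d_U(P \ A, Q \ A) ≤ d_U(P, Q). -/

import Mathlib

open scoped Classical

namespace CSPLL

variable {E : Type*}

/-- Events: `none` is the termination signal ✓, `some a` is a visible event. -/
abbrev Ev (E : Type*) := Option E

/-- A member of `Σ^{*✓}`: the termination event ✓ may occur only as the last element. -/
def ValidTrace (s : List (Ev E)) : Prop := (none : Ev E) ∉ s.dropLast

/-- The semantic domain `T↓`: pairs `(T, D)` of (behavioural) traces and divergences
satisfying the axioms of the divergence-strict traces model. -/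
structure TD (E : Type*) where
  T : Set (List (Ev E))
  D : Set (List (Ev E))
  valid : ∀ s ∈ T, ValidTrace s
  d_sub : D ⊆ T
  nonempty : [] ∈ T
  prefix_closed : ∀ s t : List (Ev E), s ++ t ∈ T → s ∈ T
  tick_div : ∀ s : List (Ev E), s ++ [none] ∈ D → s ∈ D
  div_ext : ∀ s t : List (Ev E), s ∈ D → (none : Ev E) ∉ s → ValidTrace t → s ++ t ∈ D

/-- Raw trace/divergence pairs. -/
abbrev Pair (E : Type*) := Set (List (Ev E)) × Set (List (Ev E))

def TD.pair (P : TD E) : Pair E := (P.T, P.D)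

/-- `lengthU U s` counts the occurrences of events from `U` in the trace `s`. -/
noncomputable def lengthU (U : Set E) (s : List (Ev E)) : ℕ :=
  (s.filter fun x => decide (∃ a ∈ U, x = some a)).length

/-- Restriction `(T,D) ↾_U n` of a trace/divergence pair to `U`-length `n`. -/
noncomputable def restrict (U : Set E) (n : ℕ) (P : Pair E) : Pair E :=
  let D' := P.2 ∪ {u | ∃ s t, s ∈ P.1 ∧ (none : Ev E) ∉ s ∧ lengthU U s = n ∧
                       ValidTrace t ∧ u = s ++ t}
  (D' ∪ {s ∈ P.1 | lengthU U s ≤ n}, D')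

/-- The metric `d_U(P,Q) = inf {2^{-n} | P ↾_U n = Q ↾_U n}` (taken in `[0,1]`). -/
noncomputable def dU (U : Set E) (P Q : Pair E) : ℝ :=
  sInf {x : ℝ | ∃ n : ℕ, restrict U n P = restrict U n Q ∧ x = (1 / 2 : ℝ) ^ n}

noncomputable def dTD (U : Set E) (P Q : TD E) : ℝ := dU U P.pair Q.pair

/-- Projection of a trace: delete all `A`-events (keeping ✓). -/
noncomputable def hideEv (A : Set E) (t : List (Ev E)) : List (Ev E) :=
  t.filter fun x => decide (∀ a ∈ A, x ≠ some a)

/-- Hiding `P \ A` on trace/divergence pairs. -/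
noncomputable def hideP (A : Set E) (P : TD E) : Pair E :=
  let D' := {x | ∃ t ∈ P.D, ∃ r, ValidTrace r ∧ x = hideEv A t ++ r} ∪
    {x | ∃ u : ℕ → E, (∀ n, (List.range n).map (fun i => (some (u i) : Ev E)) ∈ P.T) ∧
      ∃ N, (∀ n ≥ N, u n ∈ A) ∧ ∃ r, ValidTrace r ∧
        x = hideEv A ((List.range N).map (fun i => (some (u i) : Ev E))) ++ r}
  (D' ∪ {x | ∃ t ∈ P.T, x = hideEv A t}, D')

/-! ### Auxiliary definitions -/

/-- The set of extensions used in `restrict`. -/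
def extU (U : Set E) (n : ℕ) (T : Set (List (Ev E))) : Set (List (Ev E)) :=
  {u | ∃ s t, s ∈ T ∧ (none : Ev E) ∉ s ∧ lengthU U s = n ∧ ValidTrace t ∧ u = s ++ t}

/-- Hidden divergences coming from divergences of `P`. -/
def hDiv (A : Set E) (P : TD E) : Set (List (Ev E)) :=
  {x | ∃ t ∈ P.D, ∃ r, ValidTrace r ∧ x = hideEv A t ++ r}

/-- Finite prefix sequence of an infinite run. -/
def seqTr (u : ℕ → E) (k : ℕ) : List (Ev E) :=
  (List.range k).map (fun i => (some (u i) : Ev E))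

/-- Hidden divergences coming from infinite hidden runs. -/
def hInf (A : Set E) (P : TD E) : Set (List (Ev E)) :=
  {x | ∃ u : ℕ → E, (∀ n, seqTr u n ∈ P.T) ∧
      ∃ N, (∀ n ≥ N, u n ∈ A) ∧ ∃ r, ValidTrace r ∧ x = hideEv A (seqTr u N) ++ r}

lemma restrict_snd (U : Set E) (n : ℕ) (P : Pair E) :
    (restrict U n P).2 = P.2 ∪ extU U n P.1 := rfl

lemma restrict_fst (U : Set E) (n : ℕ) (P : Pair E) :
    (restrict U n P).1 = (P.2 ∪ extU U n P.1) ∪ {s ∈ P.1 | lengthU U s ≤ n} := rfl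

lemma hideP_snd (A : Set E) (P : TD E) :
    (hideP A P).2 = hDiv A P ∪ hInf A P := rfl

lemma hideP_fst (A : Set E) (P : TD E) :
    (hideP A P).1 = (hDiv A P ∪ hInf A P) ∪ {x | ∃ t ∈ P.T, x = hideEv A t} := rfl

/-! ### Basic lemmas -/

lemma lengthU_append (U : Set E) (s t : List (Ev E)) :
    lengthU U (s ++ t) = lengthU U s + lengthU U t := by
  simp [lengthU]

lemma hideEv_append (A : Set E) (s t : List (Ev E)) :
    hideEv A (s ++ t) = hideEv A s ++ hideEv A t := by
  simp [hideEv]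

lemma lengthU_hideEv {U A : Set E} (hdisj : A ∩ U = ∅) (t : List (Ev E)) :
    lengthU U (hideEv A t) = lengthU U t := by
  unfold lengthU hideEv
  rw [List.filter_filter]
  congr 1
  apply List.filter_congr
  intro x _
  by_cases hx : ∃ a ∈ U, x = some a
  · have hq : ∀ a ∈ A, x ≠ some a := by
      obtain ⟨b, hb, rfl⟩ := hx
      intro a ha h
      have : b = a := by simpa using h
      subst this
      exact Set.eq_empty_iff_forall_notMem.mp hdisj b ⟨ha, hb⟩
    have : (decide (∀ a ∈ A, ¬x = some a)) = true := decide_eq_true (by exact hq)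
    simp [this]
  · simp [hx]

lemma none_mem_hideEv {A : Set E} {t : List (Ev E)} (h : (none : Ev E) ∈ t) :
    (none : Ev E) ∈ hideEv A t :=
  List.mem_filter.2 ⟨h, by simp⟩

lemma none_not_mem_hideEv {A : Set E} {t : List (Ev E)} (h : (none : Ev E) ∉ t) :
    (none : Ev E) ∉ hideEv A t := fun hm => h (List.mem_of_mem_filter hm)

lemma not_mem_of_none_not_mem_hideEv {A : Set E} {t : List (Ev E)}
    (h : (none : Ev E) ∉ hideEv A t) : (none : Ev E) ∉ t := fun hm => h (none_mem_hideEv hm)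

lemma validTrace_of_not_mem {t : List (Ev E)} (h : (none : Ev E) ∉ t) : ValidTrace t :=
  fun hm => h ((List.dropLast_sublist t).subset hm)

lemma validTrace_append {s t : List (Ev E)} (hs : (none : Ev E) ∉ s) (ht : ValidTrace t) :
    ValidTrace (s ++ t) := by
  cases t with
  | nil => simpa using validTrace_of_not_mem hs
  | cons y l =>
    unfold ValidTrace at *
    rw [List.dropLast_append_of_ne_nil (by simp : y :: l ≠ [])]
    simp only [List.mem_append]
    rintro (h | h)
    · exact hs h
    · exact ht h

lemma validTrace_decomp {t : List (Ev E)} (h : ValidTrace t) :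
    (none : Ev E) ∉ t ∨ ∃ t₀, (none : Ev E) ∉ t₀ ∧ t = t₀ ++ [none] := by
  by_cases hm : (none : Ev E) ∈ t
  · right
    have hne : t ≠ [] := by rintro rfl; simp at hm
    refine ⟨t.dropLast, h, ?_⟩
    have hd := List.dropLast_append_getLast hne
    have hg : t.getLast hne = none := by
      rcases (List.mem_append.1 (hd ▸ hm)) with h' | h'
      · exact absurd h' h
      · exact (List.mem_singleton.1 h').symm
    rw [hg] at hd
    exact hd.symm
  · exact Or.inl hm

lemma validTrace_hideEv {A : Set E} {t : List (Ev E)} (h : ValidTrace t) :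
    ValidTrace (hideEv A t) := by
  rcases validTrace_decomp h with h' | ⟨t₀, h₀, rfl⟩
  · exact validTrace_of_not_mem (none_not_mem_hideEv h')
  · rw [hideEv_append]
    have h1 : hideEv A [(none : Ev E)] = [none] := by simp [hideEv]
    rw [h1]
    exact validTrace_append (none_not_mem_hideEv h₀) (by simp [ValidTrace])

/-! ### Sequence lemmas -/

lemma none_not_mem_seqTr (u : ℕ → E) (k : ℕ) : (none : Ev E) ∉ seqTr u k := by
  simp [seqTr]

lemma seqTr_succ (u : ℕ → E) (k : ℕ) : seqTr u (k+1) = seqTr u k ++ [some (u k)] := by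
  simp [seqTr, List.range_succ]

lemma seqTr_take (u : ℕ → E) (N j : ℕ) : (seqTr u N).take j = seqTr u (min j N) := by
  simp [seqTr, ← List.map_take, List.take_range]

lemma seqTr_prefix (u : ℕ → E) {k N : ℕ} (h : k ≤ N) :
    seqTr u N = seqTr u k ++ (seqTr u N).drop k := by
  conv_lhs => rw [← List.take_append_drop k (seqTr u N)]
  rw [seqTr_take, min_eq_left h]

lemma hideEv_seqTr_stable {A : Set E} {u : ℕ → E} {N : ℕ} (hA : ∀ n ≥ N, u n ∈ A) :
    ∀ k, N ≤ k → hideEv A (seqTr u k) = hideEv A (seqTr u N) := by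
  intro k hk
  induction k, hk using Nat.le_induction with
  | base => rfl
  | succ k hk ih =>
    rw [seqTr_succ, hideEv_append, ih]
    have : hideEv A [(some (u k) : Ev E)] = [] := by
      have h1 : ¬ (∀ a ∈ A, (some (u k) : Ev E) ≠ some a) := by
        push_neg
        exact ⟨u k, hA k hk, rfl⟩
      simp only [hideEv, List.filter_cons, List.filter_nil]
      simp [h1]
      exact hA k hk
    simp [this]

lemma lengthU_seqTr_stable {U A : Set E} (hdisj : A ∩ U = ∅) {u : ℕ → E} {N : ℕ}
    (hA : ∀ n ≥ N, u n ∈ A) :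
    ∀ k, N ≤ k → lengthU U (seqTr u k) = lengthU U (seqTr u N) := by
  intro k hk
  induction k, hk using Nat.le_induction with
  | base => rfl
  | succ k hk ih =>
    rw [seqTr_succ, lengthU_append, ih]
    have : lengthU U [(some (u k) : Ev E)] = 0 := by
      have h1 : ¬ (∃ a ∈ U, (some (u k) : Ev E) = some a) := by
        rintro ⟨a, ha, he⟩
        have : u k = a := by simpa using he
        subst this
        exact Set.eq_empty_iff_forall_notMem.mp hdisj (u k) ⟨hA k hk, ha⟩
      simp only [lengthU, List.filter_cons, List.filter_nil]
      simp [h1]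
      exact fun h => Set.eq_empty_iff_forall_notMem.mp hdisj (u k) ⟨hA k hk, h⟩
    simp [this]

lemma lengthU_take_le (U : Set E) (l : List (Ev E)) (j : ℕ) :
    lengthU U (l.take j) ≤ lengthU U l := by
  conv_rhs => rw [← List.take_append_drop j l]
  rw [lengthU_append]
  omega

lemma lengthU_cons (U : Set E) (x : Ev E) (l : List (Ev E)) :
    lengthU U (x :: l) = (if ∃ a ∈ U, x = some a then 1 else 0) + lengthU U l := by
  simp only [lengthU, List.filter_cons, decide_eq_true_eq]
  by_cases hx : ∃ a ∈ U, x = some a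
  · simp [hx, Nat.add_comm]
  · simp [hx]

lemma exists_take_lengthU (U : Set E) :
    ∀ (l : List (Ev E)) (n : ℕ), n ≤ lengthU U l → ∃ j, lengthU U (l.take j) = n := by
  intro l
  induction l with
  | nil =>
    intro n hn
    simp [lengthU] at hn
    exact ⟨0, by simp [hn, lengthU]⟩
  | cons x l ih =>
    intro n hn
    rw [lengthU_cons] at hn
    cases n with
    | zero => exact ⟨0, by simp [lengthU]⟩
    | succ n' =>
      by_cases hx : ∃ a ∈ U, x = some a
      · rw [if_pos hx] at hn
        obtain ⟨j, hj⟩ := ih n' (by omega)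
        refine ⟨j + 1, ?_⟩
        rw [List.take_succ_cons, lengthU_cons, if_pos hx, hj]; omega
      · rw [if_neg hx] at hn
        obtain ⟨j, hj⟩ := ih (n'+1) (by omega)
        refine ⟨j + 1, ?_⟩
        rw [List.take_succ_cons, lengthU_cons, if_neg hx, hj]; omega

/-! ### restrict at level 0 -/

lemma extU_valid {U : Set E} {n : ℕ} {T : Set (List (Ev E))} {x : List (Ev E)}
    (hx : x ∈ extU U n T) : ValidTrace x := by
  obtain ⟨s, t, _, hns, _, ht, rfl⟩ := hx
  exact validTrace_append hns ht

lemma restrict_zero (U : Set E) (R : TD E) :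
    restrict U 0 R.pair = ({t | ValidTrace t}, {t | ValidTrace t}) := by
  have hsnd : (restrict U 0 R.pair).2 = {t | ValidTrace t} := by
    rw [restrict_snd]
    apply Set.Subset.antisymm
    · rintro x (hx | hx)
      · exact R.valid x (R.d_sub hx)
      · exact extU_valid hx
    · intro x hx
      exact Or.inr ⟨[], x, R.nonempty, by simp, by simp [lengthU], hx, by simp⟩
  apply Prod.ext
  · rw [restrict_fst]
    show (restrict U 0 R.pair).2 ∪ _ = _
    rw [hsnd]
    apply Set.Subset.antisymm
    · rintro x (hx | ⟨hx1, _⟩)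
      · exact hx
      · exact R.valid x hx1
    · exact fun x hx => Or.inl hx
  · exact hsnd

/-! ### Transfer lemmas -/

lemma mem_snd_of_div {U A : Set E} (hdisj : A ∩ U = ∅) {n : ℕ} {P Q : TD E}
    (h1 : restrict U n P.pair = restrict U n Q.pair)
    {d r : List (Ev E)} (hd : d ∈ P.D) (hnd : (none : Ev E) ∉ d) (hr : ValidTrace r) :
    hideEv A d ++ r ∈ (restrict U n (hideP A Q)).2 := by
  have hmem : d ∈ (restrict U n Q.pair).2 := by
    rw [← h1, restrict_snd]; exact Or.inl hd
  rw [restrict_snd] at hmem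
  rw [restrict_snd]
  rcases hmem with hdQ | ⟨s', t', hs', hns', hlen', ht', heq⟩
  · refine Or.inl ?_
    rw [hideP_snd]
    exact Or.inl ⟨d, hdQ, r, hr, rfl⟩
  · subst heq
    have hnt' : (none : Ev E) ∉ t' := fun h => hnd (List.mem_append.2 (Or.inr h))
    refine Or.inr ⟨hideEv A s', hideEv A t' ++ r, ?_, none_not_mem_hideEv hns',
      by rw [lengthU_hideEv hdisj, hlen'],
      validTrace_append (none_not_mem_hideEv hnt') hr, ?_⟩
    · rw [hideP_fst]; exact Or.inr ⟨s', hs', rfl⟩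
    · rw [hideEv_append, List.append_assoc]

lemma mem_snd_of_trace {U A : Set E} (hdisj : A ∩ U = ∅) {n : ℕ} {P Q : TD E}
    (h1 : restrict U n P.pair = restrict U n Q.pair)
    {t₀ t : List (Ev E)} (ht₀ : t₀ ∈ P.T) (hn₀ : (none : Ev E) ∉ t₀)
    (hlen : lengthU U t₀ = n) (ht : ValidTrace t) :
    hideEv A t₀ ++ t ∈ (restrict U n (hideP A Q)).2 := by
  have hmem : t₀ ∈ (restrict U n Q.pair).1 := by
    rw [← h1, restrict_fst]; exact Or.inr ⟨ht₀, le_of_eq hlen⟩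
  rw [restrict_fst] at hmem
  rw [restrict_snd]
  rcases hmem with (hq | ⟨s', t', hs', hns', hlen', ht', heq⟩) | ⟨hqT, _⟩
  · refine Or.inl ?_
    rw [hideP_snd]
    exact Or.inl ⟨t₀, hq, t, ht, rfl⟩
  · subst heq
    have hnt' : (none : Ev E) ∉ t' := fun h => hn₀ (List.mem_append.2 (Or.inr h))
    refine Or.inr ⟨hideEv A s', hideEv A t' ++ t, ?_, none_not_mem_hideEv hns',
      by rw [lengthU_hideEv hdisj, hlen'],
      validTrace_append (none_not_mem_hideEv hnt') ht, ?_⟩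
    · rw [hideP_fst]; exact Or.inr ⟨s', hs', rfl⟩
    · rw [hideEv_append, List.append_assoc]
  · refine Or.inr ⟨hideEv A t₀, t, ?_, none_not_mem_hideEv hn₀,
      by rw [lengthU_hideEv hdisj, hlen], ht, rfl⟩
    rw [hideP_fst]; exact Or.inr ⟨t₀, hqT, rfl⟩

lemma mem_fst_of_trace {U A : Set E} (hdisj : A ∩ U = ∅) {n : ℕ} {P Q : TD E}
    (h1 : restrict U n P.pair = restrict U n Q.pair)
    {t₀ : List (Ev E)} (ht₀ : t₀ ∈ P.T) (hlen : lengthU U t₀ ≤ n) :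
    hideEv A t₀ ∈ (restrict U n (hideP A Q)).1 := by
  have hmem : t₀ ∈ (restrict U n Q.pair).1 := by
    rw [← h1, restrict_fst]; exact Or.inr ⟨ht₀, hlen⟩
  rw [restrict_fst] at hmem
  rw [restrict_fst]
  rcases hmem with (hq | ⟨s', t', hs', hns', hlen', ht', heq⟩) | ⟨hqT, _⟩
  · refine Or.inl (Or.inl ?_)
    rw [hideP_snd]
    exact Or.inl ⟨t₀, hq, [], by simp [ValidTrace], by rw [List.append_nil]⟩
  · subst heq
    have ht'val : ValidTrace t' := ht'
    refine Or.inl (Or.inr ⟨hideEv A s', hideEv A t', ?_, none_not_mem_hideEv hns',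
      by rw [lengthU_hideEv hdisj, hlen'], validTrace_hideEv ht'val, by rw [hideEv_append]⟩)
    rw [hideP_fst]; exact Or.inr ⟨s', hs', rfl⟩
  · refine Or.inr ⟨?_, by rw [lengthU_hideEv hdisj]; exact hlen⟩
    rw [hideP_fst]; exact Or.inr ⟨t₀, hqT, rfl⟩

lemma mem_snd_of_inf {U A : Set E} (hdisj : A ∩ U = ∅) {n : ℕ} {P Q : TD E}
    (h1 : restrict U n P.pair = restrict U n Q.pair)
    {u : ℕ → E} {N : ℕ} {r : List (Ev E)}
    (hu : ∀ k, seqTr u k ∈ P.T) (hA : ∀ k ≥ N, u k ∈ A) (hr : ValidTrace r) :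
    hideEv A (seqTr u N) ++ r ∈ (restrict U n (hideP A Q)).2 := by
  by_cases hL : n ≤ lengthU U (seqTr u N)
  · -- take a prefix of U-length exactly n and use the trace transfer lemma
    obtain ⟨j, hj⟩ := exists_take_lengthU U (seqTr u N) n hL
    rw [seqTr_take] at hj
    set j' := min j N with hj'
    have hsplit : seqTr u N = seqTr u j' ++ (seqTr u N).drop j' := seqTr_prefix u (min_le_right j N)
    have hndrop : (none : Ev E) ∉ (seqTr u N).drop j' := by
      intro h
      exact none_not_mem_seqTr u N (List.mem_of_mem_drop h)
    rw [hsplit, hideEv_append, List.append_assoc]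
    exact mem_snd_of_trace hdisj h1 (hu j') (none_not_mem_seqTr u j') hj
      (validTrace_append (none_not_mem_hideEv hndrop) hr)
  · push_neg at hL
    by_cases hex : ∃ k, N ≤ k ∧ seqTr u k ∈ Q.D
    · obtain ⟨k, hk, hkD⟩ := hex
      rw [restrict_snd]
      refine Or.inl ?_
      rw [hideP_snd]
      exact Or.inl ⟨seqTr u k, hkD, r, hr, by rw [hideEv_seqTr_stable hA k hk]⟩
    · have hQT : ∀ k, seqTr u k ∈ Q.T := by
        have hgen : ∀ k, N ≤ k → seqTr u k ∈ Q.T := by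
          intro k hk
          have hlenk : lengthU U (seqTr u k) ≤ n := by
            rw [lengthU_seqTr_stable hdisj hA k hk]; omega
          have hmem : seqTr u k ∈ (restrict U n Q.pair).1 := by
            rw [← h1, restrict_fst]; exact Or.inr ⟨hu k, hlenk⟩
          rw [restrict_fst] at hmem
          rcases hmem with (hq | ⟨s', t', _, _, hlen', _, heq⟩) | ⟨hq, _⟩
          · exact absurd ⟨k, hk, hq⟩ hex
          · exfalso
            have h2' : lengthU U (seqTr u k) = lengthU U s' + lengthU U t' := by
              rw [heq, lengthU_append]
            have h3' : lengthU U (seqTr u k) = lengthU U (seqTr u N) :=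
              lengthU_seqTr_stable hdisj hA k hk
            omega
          · exact hq
        intro k
        by_cases hk : N ≤ k
        · exact hgen k hk
        · refine Q.prefix_closed (seqTr u k) ((seqTr u N).drop k) ?_
          rw [← seqTr_prefix u (le_of_not_ge hk)]
          exact hgen N le_rfl
      rw [restrict_snd]
      refine Or.inl ?_
      rw [hideP_snd]
      exact Or.inr ⟨u, hQT, N, hA, r, hr, rfl⟩

lemma invalid_transfer {U A : Set E} {m : ℕ} {P Q : TD E}
    (h2 : restrict U m (hideP A P) = restrict U m (hideP A Q))
    {x : List (Ev E)} (hx : x ∈ (hideP A P).2) (hinv : ¬ ValidTrace x) :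
    x ∈ (hideP A Q).2 := by
  have hmem : x ∈ (restrict U m (hideP A Q)).2 := by
    rw [← h2, restrict_snd]; exact Or.inl hx
  rw [restrict_snd] at hmem
  rcases hmem with h | h
  · exact h
  · exact absurd (extU_valid h) hinv

/-! ### Main inclusion -/

lemma snd_incl {U A : Set E} (hdisj : A ∩ U = ∅) {n m : ℕ} {P Q : TD E}
    (h1 : restrict U n P.pair = restrict U n Q.pair)
    (h2 : restrict U m (hideP A P) = restrict U m (hideP A Q)) :
    (restrict U n (hideP A P)).2 ⊆ (restrict U n (hideP A Q)).2 := by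
  intro x hx
  rw [restrict_snd] at hx
  rcases hx with hx | hx
  · rw [hideP_snd] at hx
    rcases hx with hx | hx
    · -- hidden divergence from a divergence of P
      obtain ⟨d, hd, r, hr, rfl⟩ := hx
      have hdval : ValidTrace d := P.valid d (P.d_sub hd)
      rcases validTrace_decomp hdval with hnd | ⟨d₀, hnd₀, rfl⟩
      · exact mem_snd_of_div hdisj h1 hd hnd hr
      · have hd₀ : d₀ ∈ P.D := P.tick_div d₀ hd
        have hnone : hideEv A [(none : Ev E)] = [none] := by simp [hideEv]
        by_cases hrnil : r = []
        · subst hrnil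
          rw [List.append_nil, hideEv_append, hnone]
          exact mem_snd_of_div hdisj h1 hd₀ hnd₀ (by simp [ValidTrace])
        · have hxinv : ¬ ValidTrace (hideEv A (d₀ ++ [none]) ++ r) := by
            rw [hideEv_append, hnone]
            intro hv
            unfold ValidTrace at hv
            rw [List.append_assoc, List.dropLast_append_of_ne_nil (by simp : [(none : Ev E)] ++ r ≠ []),
              List.dropLast_append_of_ne_nil hrnil] at hv
            simp at hv
          rw [restrict_snd]
          refine Or.inl ?_
          exact invalid_transfer h2
            (by rw [hideP_snd]; exact Or.inl ⟨d₀ ++ [none], hd, r, hr, rfl⟩) hxinv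
    · -- hidden divergence from an infinite hidden run of P
      obtain ⟨u, hu, N, hA, r, hr, rfl⟩ := hx
      exact mem_snd_of_inf hdisj h1 hu hA hr
  · -- extension of a hidden trace
    obtain ⟨s, t, hs, hns, hlen, ht, rfl⟩ := hx
    rw [hideP_fst] at hs
    rcases hs with (hs | hs) | hs
    · obtain ⟨d, hd, r', hr', rfl⟩ := hs
      have hnd : (none : Ev E) ∉ d := fun h =>
        hns (List.mem_append.2 (Or.inl (none_mem_hideEv h)))
      have hnr' : (none : Ev E) ∉ r' := fun h => hns (List.mem_append.2 (Or.inr h))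
      rw [List.append_assoc]
      exact mem_snd_of_div hdisj h1 hd hnd (validTrace_append hnr' ht)
    · obtain ⟨u, hu, N, hA, r', hr', rfl⟩ := hs
      have hnr' : (none : Ev E) ∉ r' := fun h => hns (List.mem_append.2 (Or.inr h))
      rw [List.append_assoc]
      exact mem_snd_of_inf hdisj h1 hu hA (validTrace_append hnr' ht)
    · obtain ⟨t₀, ht₀, rfl⟩ := hs
      have hnt₀ : (none : Ev E) ∉ t₀ := not_mem_of_none_not_mem_hideEv hns
      have hlen₀ : lengthU U t₀ = n := by rw [← lengthU_hideEv hdisj]; exact hlen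
      exact mem_snd_of_trace hdisj h1 ht₀ hnt₀ hlen₀ ht

lemma fst_incl {U A : Set E} (hdisj : A ∩ U = ∅) {n m : ℕ} {P Q : TD E}
    (h1 : restrict U n P.pair = restrict U n Q.pair)
    (h2 : restrict U m (hideP A P) = restrict U m (hideP A Q)) :
    (restrict U n (hideP A P)).1 ⊆ (restrict U n (hideP A Q)).1 := by
  intro x hx
  rw [restrict_fst] at hx ⊢
  rcases hx with hx | ⟨hx, hlen⟩
  · exact Or.inl (snd_incl hdisj h1 h2 hx)
  · rw [hideP_fst] at hx
    rcases hx with hx | hx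
    · exact Or.inl (snd_incl hdisj h1 h2 (Or.inl hx))
    · obtain ⟨t₀, ht₀, rfl⟩ := hx
      have hlen₀ : lengthU U t₀ ≤ n := by rw [← lengthU_hideEv hdisj]; exact hlen
      have := mem_fst_of_trace (A := A) hdisj h1 ht₀ hlen₀
      rw [restrict_fst] at this
      exact this

lemma key_lemma {U A : Set E} (hdisj : A ∩ U = ∅) {n m : ℕ} {P Q : TD E}
    (h1 : restrict U n P.pair = restrict U n Q.pair)
    (h2 : restrict U m (hideP A P) = restrict U m (hideP A Q)) :
    restrict U n (hideP A P) = restrict U n (hideP A Q) := by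
  have hdisj' : A ∩ U = ∅ := hdisj
  apply Prod.ext
  · exact Set.Subset.antisymm (fst_incl hdisj h1 h2) (fst_incl hdisj h1.symm h2.symm)
  · exact Set.Subset.antisymm (snd_incl hdisj h1 h2) (snd_incl hdisj h1.symm h2.symm)

/-- Hiding a set of events disjoint from `U` is nonexpansive with respect to `d_U`. -/
theorem hide_nonexpansive (U A : Set E) (hdisj : A ∩ U = ∅) (P Q : TD E) :
    dU U (hideP A P) (hideP A Q) ≤ dU U P.pair Q.pair := by
  unfold dU
  by_cases hH : ∃ k : ℕ, restrict U k (hideP A P) = restrict U k (hideP A Q)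
  · obtain ⟨m, hm⟩ := hH
    apply le_csInf
    · exact ⟨1, 0, by rw [restrict_zero U P, restrict_zero U Q], by norm_num⟩
    · rintro b ⟨k, hk, rfl⟩
      apply csInf_le
      · refine ⟨0, ?_⟩
        rintro y ⟨j, -, rfl⟩
        positivity
      · exact ⟨k, key_lemma hdisj hk hm, rfl⟩
  · have hempty : {x : ℝ | ∃ k : ℕ, restrict U k (hideP A P) = restrict U k (hideP A Q) ∧
        x = (1 / 2 : ℝ) ^ k} = ∅ := by
      apply Set.eq_empty_iff_forall_notMem.mpr
      rintro x ⟨k, hk, -⟩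
      exact hH ⟨k, hk⟩
    rw [hempty, Real.sInf_empty]
    apply Real.sInf_nonneg
    rintro y ⟨j, -, rfl⟩
    positivity

end CSPLL
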